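/- Let Γ be positive definite r×r and Δ_s, Δ_t ∈ ℝ^r, with a* = Γ⁻¹Δ_s and b* = Γ⁻¹Δ_t. For any a, b ∈ ℝ^r, define the 2×2 matrix M(a,b) with entries M₁₁ = aᵀΓa − 2aᵀΔ_s + c_s, M₂₂ = bᵀΓb − 2bᵀΔ_t + c_t, M₁₂ = M₂₁ = aᵀΓb − aᵀΔ_t − bᵀΔ_s + c_{st}, where c_s, c_t, c_{st} are fixed constants. Then M(a,b) − M(a*,b*) is positive semidefinite for all a, b. -/

import Mathlib

open Matrix

lemma gram2_posSemidef {r : ℕ} (Γ : Matrix (Fin r) (Fin r) ℝ)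
    (hΓ : Γ.PosDef) (u v : Fin r → ℝ) :
    (!![u ⬝ᵥ (Γ *ᵥ u), u ⬝ᵥ (Γ *ᵥ v);
        u ⬝ᵥ (Γ *ᵥ v), v ⬝ᵥ (Γ *ᵥ v)] : Matrix (Fin 2) (Fin 2) ℝ).PosSemidef := by
  have ht : Γᵀ = Γ := by
    have := hΓ.isHermitian
    simpa [Matrix.IsHermitian, Matrix.conjTranspose, Matrix.map, Matrix.transpose] using this
  have hsym : v ⬝ᵥ (Γ *ᵥ u) = u ⬝ᵥ (Γ *ᵥ v) := by
    rw [Matrix.dotProduct_mulVec, ← Matrix.mulVec_transpose, ht, dotProduct_comm]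
  rw [Matrix.posSemidef_iff_dotProduct_mulVec]
  constructor
  · unfold Matrix.IsHermitian
    ext i j
    fin_cases i <;> fin_cases j <;>
      simp [Matrix.conjTranspose, Matrix.vecHead, Matrix.vecTail]
  · intro x
    set p := u ⬝ᵥ (Γ *ᵥ u) with hp
    set q := u ⬝ᵥ (Γ *ᵥ v) with hq
    set s := v ⬝ᵥ (Γ *ᵥ v) with hs
    have lhs : star x ⬝ᵥ ((!![p, q; q, s] : Matrix (Fin 2) (Fin 2) ℝ) *ᵥ x)
        = x 0 * x 0 * p + 2 * (x 0 * x 1) * q + x 1 * x 1 * s := by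
      simp [dotProduct, Matrix.mulVec, Fin.sum_univ_two]
      ring
    have expand : (x 0 • u + x 1 • v) ⬝ᵥ (Γ *ᵥ (x 0 • u + x 1 • v))
        = x 0 * x 0 * p + 2 * (x 0 * x 1) * q + x 1 * x 1 * s := by
      rw [hp, hq, hs]
      simp only [Matrix.mulVec_add, Matrix.mulVec_smul, dotProduct_add,
        add_dotProduct, dotProduct_smul, smul_dotProduct,
        smul_eq_mul, hsym]
      ring
    rw [lhs, ← expand]
    exact hΓ.posSemidef.dotProduct_mulVec_nonneg _

/-- Complete MSPE matrix dominance of the joint BLIPs: with `a* = Γ⁻¹Δ_s` and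
`b* = Γ⁻¹Δ_t`, the difference `M(a,b) − M(a*,b*)` of the 2×2 MSPE matrices is
positive semidefinite for all `a, b`. -/
theorem joint_blip_mspe_dominance {r : ℕ} (Γ : Matrix (Fin r) (Fin r) ℝ)
    (hΓ : Γ.PosDef) (Δs Δt : Fin r → ℝ) (cs ct cst : ℝ)
    (M : (Fin r → ℝ) → (Fin r → ℝ) → Matrix (Fin 2) (Fin 2) ℝ)
    (hM : ∀ a b, M a b =
      !![a ⬝ᵥ (Γ *ᵥ a) - 2 * (a ⬝ᵥ Δs) + cs,
         a ⬝ᵥ (Γ *ᵥ b) - a ⬝ᵥ Δt - b ⬝ᵥ Δs + cst;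
         a ⬝ᵥ (Γ *ᵥ b) - a ⬝ᵥ Δt - b ⬝ᵥ Δs + cst,
         b ⬝ᵥ (Γ *ᵥ b) - 2 * (b ⬝ᵥ Δt) + ct])
    (astar bstar : Fin r → ℝ)
    (hastar : astar = Γ⁻¹ *ᵥ Δs) (hbstar : bstar = Γ⁻¹ *ᵥ Δt) :
    ∀ a b, (M a b - M astar bstar).PosSemidef := by
  intro a b
  have hdet : IsUnit Γ.det := isUnit_iff_ne_zero.2 hΓ.det_pos.ne'
  have hGA : Γ *ᵥ astar = Δs := by
    rw [hastar, Matrix.mulVec_mulVec, Matrix.mul_nonsing_inv _ hdet, Matrix.one_mulVec]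
  have hGB : Γ *ᵥ bstar = Δt := by
    rw [hbstar, Matrix.mulVec_mulVec, Matrix.mul_nonsing_inv _ hdet, Matrix.one_mulVec]
  have ht : Γᵀ = Γ := by
    have := hΓ.isHermitian
    simpa [Matrix.IsHermitian, Matrix.conjTranspose, Matrix.map, Matrix.transpose] using this
  have hsym : ∀ x y : Fin r → ℝ, x ⬝ᵥ (Γ *ᵥ y) = y ⬝ᵥ (Γ *ᵥ x) := by
    intro x y
    rw [Matrix.dotProduct_mulVec, ← Matrix.mulVec_transpose, ht, dotProduct_comm]
  have hEq : M a b - M astar bstar =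
      !![(a - astar) ⬝ᵥ (Γ *ᵥ (a - astar)), (a - astar) ⬝ᵥ (Γ *ᵥ (b - bstar));
         (a - astar) ⬝ᵥ (Γ *ᵥ (b - bstar)), (b - bstar) ⬝ᵥ (Γ *ᵥ (b - bstar))] := by
    rw [hM, hM]
    ext i j
    fin_cases i <;> fin_cases j <;>
      simp [← hGA, ← hGB, Matrix.mulVec_sub, dotProduct_sub,
        sub_dotProduct, hsym a astar, hsym b astar, hsym b bstar,
        hsym bstar astar, Matrix.vecHead, Matrix.vecTail] <;> ring
  rw [hEq]
  exact gram2_posSemidef Γ hΓ _ _
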